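/- Fix real numbers $\mathfrak{a}(0)$, $\mathfrak{b}(0)$, $\mathfrak{a}'(0)$, $\mathfrak{b}'(0)$ with $\mathfrak{b}(0) \ne 0$. Consider the linear subspace $\mathcal{H} \subseteq \mathbb{R}^8$ of vectors $[p_1, q_1, \tilde q_1, s_1, p_2, q_2, \tilde q_2, s_2]$ for which there exist $r_1, \tilde r_2 \in \mathbb{R}$ satisfying: $p_1 = p_2$, $q_1 = \tilde q_2$, $r_1 = \tilde r_2$, $\tilde q_1 = \mathfrak{a}(0)\tilde q_2 + \mathfrak{b}(0) q_2$, and $s_1 = 2\mathfrak{a}(0)\tilde r_2 + \mathfrak{b}(0) s_2 + \mathfrak{a}'(0)\tilde q_2 + \mathfrak{b}'(0) q_2$. Then $\dim \mathcal{H} = 5$ if $\mathfrak{a}(0) \ne 0$, and $\dim \mathcal{H} = 4$ if $\mathfrak{a}(0) = 0$. -/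

import Mathlib

/-- The space `ℋ` of first-order Taylor data `[p₁,q₁,q̃₁,s₁,p₂,q₂,q̃₂,s₂]` at a vertex
shared by two patches with gluing data values `𝔞(0), 𝔟(0), 𝔞'(0), 𝔟'(0)`:
there exist `r₁ = r̃₂` with `p₁ = p₂`, `q₁ = q̃₂`,
`q̃₁ = 𝔞(0) q̃₂ + 𝔟(0) q₂`, `s₁ = 2𝔞(0) r̃₂ + 𝔟(0) s₂ + 𝔞'(0) q̃₂ + 𝔟'(0) q₂`.
Coordinates: `x 0 = p₁, x 1 = q₁, x 2 = q̃₁, x 3 = s₁, x 4 = p₂, x 5 = q₂,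
x 6 = q̃₂, x 7 = s₂`. -/
def vertexH (A B A' B' : ℝ) : Submodule ℝ (Fin 8 → ℝ) where
  carrier := {x | x 0 = x 4 ∧ x 1 = x 6 ∧ x 2 = A * x 6 + B * x 5 ∧
    ∃ t : ℝ, x 3 = 2 * A * t + B * x 7 + A' * x 6 + B' * x 5}
  add_mem' := by
    rintro x y ⟨h1, h2, h3, t, ht⟩ ⟨g1, g2, g3, s, hs⟩
    refine ⟨?_, ?_, ?_, t + s, ?_⟩ <;> simp only [Pi.add_apply]
    · rw [h1, g1]
    · rw [h2, g2]
    · rw [h3, g3]; ring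
    · rw [ht, hs]; ring
  zero_mem' := ⟨rfl, rfl, by simp, 0, by simp⟩
  smul_mem' := by
    rintro c x ⟨h1, h2, h3, t, ht⟩
    refine ⟨?_, ?_, ?_, c * t, ?_⟩ <;> simp only [Pi.smul_apply, smul_eq_mul]
    · rw [h1]
    · rw [h2]
    · rw [h3]; ring
    · rw [ht]; ring

@[simp] lemma cv5 {α : Type*} (a0 a1 a2 a3 a4 a5 a6 a7 : α) :
    ![a0,a1,a2,a3,a4,a5,a6,a7] (5:Fin 8) = a5 := rfl
@[simp] lemma cv6 {α : Type*} (a0 a1 a2 a3 a4 a5 a6 a7 : α) :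
    ![a0,a1,a2,a3,a4,a5,a6,a7] (6:Fin 8) = a6 := rfl
@[simp] lemma cv7 {α : Type*} (a0 a1 a2 a3 a4 a5 a6 a7 : α) :
    ![a0,a1,a2,a3,a4,a5,a6,a7] (7:Fin 8) = a7 := rfl

@[simp] lemma mk8_2 (h : 2 < 8) : (⟨2, h⟩ : Fin 8) = 2 := rfl
@[simp] lemma mk8_3 (h : 3 < 8) : (⟨3, h⟩ : Fin 8) = 3 := rfl
@[simp] lemma mk8_4 (h : 4 < 8) : (⟨4, h⟩ : Fin 8) = 4 := rfl
@[simp] lemma mk8_5 (h : 5 < 8) : (⟨5, h⟩ : Fin 8) = 5 := rfl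
@[simp] lemma mk8_6 (h : 6 < 8) : (⟨6, h⟩ : Fin 8) = 6 := rfl
@[simp] lemma mk8_7 (h : 7 < 8) : (⟨7, h⟩ : Fin 8) = 7 := rfl
@[simp] lemma mk5_2 (h : 2 < 5) : (⟨2, h⟩ : Fin 5) = 2 := rfl
@[simp] lemma mk5_3 (h : 3 < 5) : (⟨3, h⟩ : Fin 5) = 3 := rfl
@[simp] lemma mk5_4 (h : 4 < 5) : (⟨4, h⟩ : Fin 5) = 4 := rfl
@[simp] lemma mk4_2 (h : 2 < 4) : (⟨2, h⟩ : Fin 4) = 2 := rfl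
@[simp] lemma mk4_3 (h : 3 < 4) : (⟨3, h⟩ : Fin 4) = 3 := rfl

noncomputable def vA (A B : ℝ) : Fin 5 → (Fin 8 → ℝ) :=
  ![![1,0,0,0,1,0,0,0],
    ![0,1,A,0,0,0,1,0],
    ![0,0,B,0,0,1,0,0],
    ![0,0,0,0,0,0,0,1],
    ![0,0,0,1,0,0,0,0]]

noncomputable def vB (B A' B' : ℝ) : Fin 4 → (Fin 8 → ℝ) :=
  ![![1,0,0,0,1,0,0,0],
    ![0,1,0,A',0,0,1,0],
    ![0,0,B,B',0,1,0,0],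
    ![0,0,0,B,0,0,0,1]]

lemma liA (A B : ℝ) : LinearIndependent ℝ (vA A B) := by
  rw [Fintype.linearIndependent_iff]
  intro g hg
  have h0 := congrFun hg 0
  have h1 := congrFun hg 1
  have h5 := congrFun hg (5:Fin 8)
  have h7 := congrFun hg (7:Fin 8)
  have h3 := congrFun hg 3
  simp [vA, Fin.sum_univ_five, Matrix.vecHead, Matrix.vecTail] at h0 h1 h5 h7 h3
  intro i
  fin_cases i <;> simp <;> first | exact h0 | exact h1 | exact h5 | exact h7 | exact h3

lemma liB (B A' B' : ℝ) : LinearIndependent ℝ (vB B A' B') := by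
  rw [Fintype.linearIndependent_iff]
  intro g hg
  have h0 := congrFun hg 0
  have h1 := congrFun hg 1
  have h5 := congrFun hg (5:Fin 8)
  have h7 := congrFun hg (7:Fin 8)
  simp [vB, Fin.sum_univ_four, Matrix.vecHead, Matrix.vecTail] at h0 h1 h5 h7
  intro i
  fin_cases i <;> simp <;> first | exact h0 | exact h1 | exact h5 | exact h7

lemma spanA (A B A' B' : ℝ) (hA : A ≠ 0) :
    vertexH A B A' B' = Submodule.span ℝ (Set.range (vA A B)) := by
  apply le_antisymm
  · intro x hx
    obtain ⟨h1, h2, h3, t, ht⟩ := hx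
    have hx' : x = x 0 • vA A B 0 + x 1 • vA A B 1 + x 5 • vA A B 2
        + x 7 • vA A B 3 + x 3 • vA A B 4 := by
      funext j
      fin_cases j <;> simp [vA, Matrix.vecHead, Matrix.vecTail] <;>
        first
          | linarith [h1, h2, h3, ht]
          | linear_combination h3 - A * h2
    rw [hx']
    have hm : ∀ i, vA A B i ∈ Submodule.span ℝ (Set.range (vA A B)) :=
      fun i => Submodule.subset_span ⟨i, rfl⟩
    exact Submodule.add_mem _ (Submodule.add_mem _ (Submodule.add_mem _
      (Submodule.add_mem _ (Submodule.smul_mem _ _ (hm 0)) (Submodule.smul_mem _ _ (hm 1)))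
      (Submodule.smul_mem _ _ (hm 2))) (Submodule.smul_mem _ _ (hm 3)))
      (Submodule.smul_mem _ _ (hm 4))
  · rw [Submodule.span_le]
    rintro _ ⟨i, rfl⟩
    fin_cases i
    · exact ⟨rfl, rfl, by simp [vA, Matrix.vecHead, Matrix.vecTail], 0,
        by simp [vA, Matrix.vecHead, Matrix.vecTail]⟩
    · refine ⟨rfl, rfl, by simp [vA, Matrix.vecHead, Matrix.vecTail], -A'/(2*A), ?_⟩
      simp [vA, Matrix.vecHead, Matrix.vecTail]; field_simp; try ring
    · refine ⟨rfl, rfl, by simp [vA, Matrix.vecHead, Matrix.vecTail], -B'/(2*A), ?_⟩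
      simp [vA, Matrix.vecHead, Matrix.vecTail]; field_simp; try ring
    · refine ⟨rfl, rfl, by simp [vA, Matrix.vecHead, Matrix.vecTail], -B/(2*A), ?_⟩
      simp [vA, Matrix.vecHead, Matrix.vecTail]; field_simp; try ring
    · refine ⟨rfl, rfl, by simp [vA, Matrix.vecHead, Matrix.vecTail], 1/(2*A), ?_⟩
      simp [vA, Matrix.vecHead, Matrix.vecTail]; field_simp; try ring

lemma spanB (B A' B' : ℝ) :
    vertexH 0 B A' B' = Submodule.span ℝ (Set.range (vB B A' B')) := by
  apply le_antisymm
  · intro x hx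
    obtain ⟨h1, h2, h3, t, ht⟩ := hx
    have hx' : x = x 0 • vB B A' B' 0 + x 1 • vB B A' B' 1 + x 5 • vB B A' B' 2
        + x 7 • vB B A' B' 3 := by
      funext j
      fin_cases j <;> simp [vB, Matrix.vecHead, Matrix.vecTail] <;>
        first
          | linarith [h1, h2, h3, ht]
          | linear_combination ht - A' * h2
    rw [hx']
    have hm : ∀ i, vB B A' B' i ∈ Submodule.span ℝ (Set.range (vB B A' B')) :=
      fun i => Submodule.subset_span ⟨i, rfl⟩
    exact Submodule.add_mem _ (Submodule.add_mem _
      (Submodule.add_mem _ (Submodule.smul_mem _ _ (hm 0)) (Submodule.smul_mem _ _ (hm 1)))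
      (Submodule.smul_mem _ _ (hm 2))) (Submodule.smul_mem _ _ (hm 3))
  · rw [Submodule.span_le]
    rintro _ ⟨i, rfl⟩
    fin_cases i <;>
      exact ⟨rfl, rfl, by simp [vB, Matrix.vecHead, Matrix.vecTail], 0,
        by simp [vB, Matrix.vecHead, Matrix.vecTail]⟩


/-- Dimension of the Taylor data space at a two-patch vertex: `5` if `𝔞(0) ≠ 0`
(non-crossing edge) and `4` if `𝔞(0) = 0` (crossing edge). -/
theorem dim_vertexH (A B A' B' : ℝ) (hB : B ≠ 0) :
    (A ≠ 0 → Module.finrank ℝ ↥(vertexH A B A' B') = 5) ∧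
    (A = 0 → Module.finrank ℝ ↥(vertexH A B A' B') = 4) := by
  constructor
  · intro hA
    rw [spanA A B A' B' hA, finrank_span_eq_card (liA A B)]
    simp
  · rintro rfl
    rw [spanB B A' B', finrank_span_eq_card (liB B A' B')]
    simp
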